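/- arXiv:1804.08308 — 5 statements merged into one kernel-verified Lean document; each statement's English description precedes it below -/
import Mathlib

section
/- Let (M, →) be a transition system and let P, Q ⊆ M be state predicates. Then the reachability predicate P ⇒ Q is demonically valid, i.e. (P, Q) ∈ ν DVP̂, if and only if every complete execution path τ of (M, →) with hd(τ) ∈ P satisfies P ⇒ Q, i.e. (τ, (P, Q)) ∈ ν EPSRP̂. -/
variable {M : Type*}

/-- `P` is runnable: `P ≠ ∅` and every state in `P` has a successor. -/
def Runnable (R : M → M → Prop) (P : Set M) : Prop :=
  P ≠ ∅ ∧ ∀ γ ∈ P, ∃ γ', R γ γ'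

/-- The derivative `∂(P)` of a state predicate `P`. -/
def derivS (R : M → M → Prop) (P : Set M) : Set M :=
  {γ' | ∃ γ ∈ P, R γ γ'}

/-- The monotone operator `DVP̂` on sets of reachability predicates. -/
def DVPhat (R : M → M → Prop) : Set (Set M × Set M) →o Set (Set M × Set M) where
  toFun X := {pq | pq.1 ⊆ pq.2 ∨
      (Runnable R (pq.1 \ pq.2) ∧ (derivS R (pq.1 \ pq.2), pq.2) ∈ X)}
  monotone' := by
    intro X Y hXY pq hpq
    rcases hpq with h | ⟨h1, h2⟩
    · exact Or.inl h
    · exact Or.inr ⟨h1, hXY h2⟩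

/-- `(M, →) ⊨∀ P ⇒ Q` : the reachability predicate `P ⇒ Q` is demonically valid,
i.e. `(P, Q) ∈ ν DVP̂`. -/
def DemValid (R : M → M → Prop) (P Q : Set M) : Prop :=
  (P, Q) ∈ OrderHom.gfp (DVPhat R)

/-- A complete execution path of the transition system `(M, R)`: a nonempty finite or
infinite sequence of states such that consecutive states are related by `R` and, if the
sequence is finite, its last state is irreducible. -/
structure ExecPath (M : Type*) (R : M → M → Prop) where
  seq : ℕ → Option M
  nonempty : (seq 0).isSome
  closed : ∀ n, (seq (n + 1)).isSome → (seq n).isSome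
  step : ∀ n a b, seq n = some a → seq (n + 1) = some b → R a b
  complete : ∀ n a, seq n = some a → seq (n + 1) = none → ∀ b, ¬ R a b

/-- The first state of an execution path. -/
def ExecPath.hd {R : M → M → Prop} (τ : ExecPath M R) : M :=
  (τ.seq 0).get τ.nonempty

/-- `τ.IsCons γ τ'` means `τ = γ·τ'`: `τ` is the execution path with first state `γ`
followed by the execution path `τ'`. -/
def ExecPath.IsCons {R : M → M → Prop} (τ : ExecPath M R) (γ : M) (τ' : ExecPath M R) : Prop :=
  τ.seq 0 = some γ ∧ ∀ n, τ.seq (n + 1) = τ'.seq n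

/-- The monotone operator `EPSRP̂` on sets of pairs (execution path, reachability predicate). -/
def EPSRPhat (R : M → M → Prop) :
    Set (ExecPath M R × (Set M × Set M)) →o Set (ExecPath M R × (Set M × Set M)) where
  toFun Y := {p | p.1.hd ∈ p.2.1 ∩ p.2.2 ∨
      ∃ γ₀ τ', p.1.IsCons γ₀ τ' ∧ γ₀ ∈ p.2.1 ∧ R γ₀ τ'.hd ∧
        (τ', (derivS R p.2.1, p.2.2)) ∈ Y}
  monotone' := by
    intro X Y hXY p hp
    rcases hp with h | ⟨γ₀, τ', h1, h2, h3, h4⟩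
    · exact Or.inl h
    · exact Or.inr ⟨γ₀, τ', h1, h2, h3, hXY h4⟩

/-- `τ ⊨∀ P ⇒ Q` : the execution path `τ` satisfies the reachability predicate `P ⇒ Q`,
i.e. `(τ, (P, Q)) ∈ ν EPSRP̂`. -/
def PathSat {M : Type*} (R : M → M → Prop) (τ : ExecPath M R) (P Q : Set M) : Prop :=
  (τ, (P, Q)) ∈ OrderHom.gfp (EPSRPhat R)

namespace ExecPath

theorem ext' {R : M → M → Prop} {τ τ' : ExecPath M R} (h : ∀ n, τ.seq n = τ'.seq n) :
    τ = τ' := by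
  cases τ with | mk s hn hc hs hcm =>
  cases τ' with | mk s' hn' hc' hs' hcm' =>
  have : s = s' := funext h
  subst this
  rfl

theorem seq_zero {R : M → M → Prop} (τ : ExecPath M R) : τ.seq 0 = some τ.hd :=
  (Option.some_get τ.nonempty).symm

/-- The tail of an execution path with at least two states. -/
def tail {R : M → M → Prop} (τ : ExecPath M R) (h : (τ.seq 1).isSome) : ExecPath M R where
  seq n := τ.seq (n + 1)
  nonempty := h
  closed n := τ.closed (n + 1)
  step n := τ.step (n + 1)
  complete n := τ.complete (n + 1)

theorem isCons_tail {R : M → M → Prop} (τ : ExecPath M R) (h : (τ.seq 1).isSome) :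
    τ.IsCons τ.hd (τ.tail h) :=
  ⟨τ.seq_zero, fun _ => rfl⟩

theorem step_hd_tail {R : M → M → Prop} (τ : ExecPath M R) (h : (τ.seq 1).isSome) :
    R τ.hd (τ.tail h).hd :=
  τ.step 0 _ _ τ.seq_zero ((τ.tail h).seq_zero)

/-- Prepending a state to an execution path. -/
def cons {R : M → M → Prop} (γ : M) (τ' : ExecPath M R) (h : R γ τ'.hd) : ExecPath M R where
  seq n := match n with
    | 0 => some γ
    | n + 1 => τ'.seq n
  nonempty := rfl
  closed n := by
    match n with
    | 0 => intro _; rfl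
    | n + 1 => exact τ'.closed n
  step n a b := by
    match n with
    | 0 =>
      intro ha hb
      cases ha
      replace hb : τ'.seq 0 = some b := hb
      rw [τ'.seq_zero] at hb
      cases hb
      exact h
    | n + 1 => exact τ'.step n a b
  complete n a := by
    match n with
    | 0 =>
      intro _ hb
      replace hb : τ'.seq 0 = none := hb
      rw [τ'.seq_zero] at hb
      cases hb
    | n + 1 => exact τ'.complete n a

theorem hd_cons {R : M → M → Prop} (γ : M) (τ' : ExecPath M R) (h : R γ τ'.hd) :
    (cons γ τ' h).hd = γ := rfl

/-- The one-state execution path at an irreducible state. -/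
def single {R : M → M → Prop} (γ : M) (h : ∀ b, ¬ R γ b) : ExecPath M R where
  seq n := if n = 0 then some γ else none
  nonempty := rfl
  closed n := by
    intro hs
    simp at hs
  step n a b := by
    intro _ hb
    simp at hb
  complete n a := by
    intro ha _
    match n with
    | 0 =>
      have ha' : γ = a := by simpa using ha
      subst ha'
      exact h
    | n + 1 => simp at ha

end ExecPath

/-- The reachability predicate `P ⇒ Q` is demonically valid iff every complete execution
path `τ` with `hd(τ) ∈ P` satisfies `P ⇒ Q`. -/
theorem demValid_iff_forall_execPath (M : Type*) (R : M → M → Prop) (P Q : Set M) :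
    DemValid R P Q ↔ ∀ τ : ExecPath M R, τ.hd ∈ P → PathSat R τ P Q := by
  constructor
  · -- forward direction: coinduction on EPSRPhat
    intro hdv τ hτ
    let Y : Set (ExecPath M R × (Set M × Set M)) :=
      {p | ∃ S : Set M, p.1.hd ∈ S ∧ S ⊆ p.2.1 ∧ DemValid R S p.2.2}
    have hY : Y ≤ (EPSRPhat R) Y := by
      rintro ⟨σ, A, B⟩ ⟨S, hmem, hSA, hSB⟩
      have hSB' : (S, B) ∈ (DVPhat R) (OrderHom.gfp (DVPhat R)) := by
        rw [OrderHom.map_gfp]; exact hSB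
      rcases hSB' with hsub | ⟨⟨_, hrun⟩, hder⟩
      · exact Or.inl ⟨hSA hmem, hsub hmem⟩
      · by_cases hq : σ.hd ∈ B
        · exact Or.inl ⟨hSA hmem, hq⟩
        · have hmem' : σ.hd ∈ S \ B := ⟨hmem, hq⟩
          obtain ⟨b, hb⟩ := hrun _ hmem'
          have hs1 : (σ.seq 1).isSome := by
            cases hs : σ.seq 1 with
            | none => exact absurd hb (σ.complete 0 _ σ.seq_zero hs b)
            | some c => rfl
          refine Or.inr ⟨σ.hd, σ.tail hs1, σ.isCons_tail hs1, hSA hmem,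
            σ.step_hd_tail hs1, ?_⟩
          refine ⟨derivS R (S \ B), ⟨σ.hd, hmem', σ.step_hd_tail hs1⟩, ?_, hder⟩
          rintro x ⟨y, hy, hxy⟩
          exact ⟨y, hSA hy.1, hxy⟩
    have : (τ, (P, Q)) ∈ Y := ⟨P, hτ, le_refl _, hdv⟩
    exact OrderHom.le_gfp (EPSRPhat R) hY this
  · -- backward direction: coinduction on DVPhat
    intro hall
    let X : Set (Set M × Set M) :=
      {pq | ∀ τ : ExecPath M R, τ.hd ∈ pq.1 → ∃ A, pq.1 ⊆ A ∧ PathSat R τ A pq.2}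
    have hX : X ≤ (DVPhat R) X := by
      rintro ⟨A, B⟩ hA
      by_cases hsub : A ⊆ B
      · exact Or.inl hsub
      · refine Or.inr ⟨⟨?_, ?_⟩, ?_⟩
        · -- A \ B nonempty
          intro hempty
          obtain ⟨γ, hγA, hγB⟩ := Set.not_subset.mp hsub
          exact absurd (Set.eq_empty_iff_forall_notMem.mp hempty γ) (fun h => h ⟨hγA, hγB⟩)
        · -- every state of A \ B has a successor
          intro γ hγ
          by_contra hirr
          push_neg at hirr
          set τ := ExecPath.single (R := R) γ hirr with hτdef
          have hhd : τ.hd = γ := rfl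
          obtain ⟨A', _, hsat⟩ := hA τ (hhd ▸ hγ.1)
          have hsat' : (τ, (A', B)) ∈ (EPSRPhat R) (OrderHom.gfp (EPSRPhat R)) := by
            rw [OrderHom.map_gfp]; exact hsat
          rcases hsat' with ⟨_, hq⟩ | ⟨γ₀, τ'', ⟨_, hseq⟩, _⟩
          · exact hγ.2 (hhd ▸ hq)
          · have : τ.seq 1 = τ''.seq 0 := hseq 0
            rw [τ''.seq_zero] at this
            simp [hτdef, ExecPath.single] at this
        · -- (∂(A \ B), B) ∈ X
          intro τ' hτ'
          obtain ⟨γ, hγAB, hstep⟩ := hτ'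
          set τ := ExecPath.cons γ τ' hstep with hτdef
          have hhd : τ.hd = γ := rfl
          obtain ⟨A', hAA', hsat⟩ := hA τ (hhd ▸ hγAB.1)
          have hsat' : (τ, (A', B)) ∈ (EPSRPhat R) (OrderHom.gfp (EPSRPhat R)) := by
            rw [OrderHom.map_gfp]; exact hsat
          rcases hsat' with ⟨_, hq⟩ | ⟨γ₀, τ'', ⟨_, hseq⟩, _, _, hmem⟩
          · exact absurd (hhd ▸ hq) hγAB.2
          · have hτ'' : τ'' = τ' := by
              apply ExecPath.ext'
              intro n
              rw [← hseq n]
              rfl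
            subst hτ''
            refine ⟨derivS R A', ?_, hmem⟩
            rintro x ⟨y, hy, hxy⟩
            exact ⟨y, hAA' hy.1, hxy⟩
    exact OrderHom.le_gfp (DVPhat R) hX (fun τ hτ => ⟨P, le_refl _, hall τ hτ⟩)
end

section
/- Let (M, →) be a transition system and let P₁, P₂, Q ⊆ M be state predicates. If (M, →) ⊨∀ P₁ ⇒ Q and (M, →) ⊨∀ P₂ ⇒ Q, then (M, →) ⊨∀ (P₁ ∪ P₂) ⇒ Q. -/
variable {M : Type*}

/-- The union of two demonically valid predicates with the same target is valid. -/
theorem demValid_union (M : Type*) (R : M → M → Prop) (P₁ P₂ Q : Set M)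
    (h₁ : DemValid R P₁ Q) (h₂ : DemValid R P₂ Q) : DemValid R (P₁ ∪ P₂) Q := by
  set X : Set (Set M × Set M) :=
    {pq | ∃ A B, pq.1 = A ∪ B ∧ DemValid R A pq.2 ∧ DemValid R B pq.2} with hX
  have hmem : (P₁ ∪ P₂, Q) ∈ X := ⟨P₁, P₂, rfl, h₁, h₂⟩
  have hgfpX : OrderHom.gfp (DVPhat R) ⊆ X := by
    intro pq hpq
    exact ⟨pq.1, pq.1, (Set.union_self _).symm, hpq, hpq⟩
  have hpost : X ≤ (DVPhat R) X := by
    rintro ⟨P, Q'⟩ ⟨A, B, hP, hA, hB⟩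
    simp only at hP; subst hP
    have hA' : (A, Q') ∈ (DVPhat R) (OrderHom.gfp (DVPhat R)) := by
      rw [OrderHom.map_gfp]; exact hA
    have hB' : (B, Q') ∈ (DVPhat R) (OrderHom.gfp (DVPhat R)) := by
      rw [OrderHom.map_gfp]; exact hB
    have hsplit : (A ∪ B) \ Q' = (A \ Q') ∪ (B \ Q') := Set.union_diff_distrib
    have hderiv : derivS R ((A \ Q') ∪ (B \ Q')) = derivS R (A \ Q') ∪ derivS R (B \ Q') := by
      ext x
      constructor
      · rintro ⟨γ, hγ | hγ, hR⟩
        · exact Or.inl ⟨γ, hγ, hR⟩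
        · exact Or.inr ⟨γ, hγ, hR⟩
      · rintro (⟨γ, hγ, hR⟩ | ⟨γ, hγ, hR⟩)
        · exact ⟨γ, Or.inl hγ, hR⟩
        · exact ⟨γ, Or.inr hγ, hR⟩
    rcases hA' with hAQ | ⟨hArun, hAderiv⟩
    · rcases hB' with hBQ | ⟨hBrun, hBderiv⟩
      · exact Or.inl (Set.union_subset hAQ hBQ)
      · refine Or.inr ⟨?_, ?_⟩
        · rw [hsplit, Set.diff_eq_empty.mpr hAQ, Set.empty_union]; exact hBrun
        · rw [hsplit, Set.diff_eq_empty.mpr hAQ, Set.empty_union]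
          exact hgfpX hBderiv
    · rcases hB' with hBQ | ⟨hBrun, hBderiv⟩
      · refine Or.inr ⟨?_, ?_⟩
        · rw [hsplit, Set.diff_eq_empty.mpr hBQ, Set.union_empty]; exact hArun
        · rw [hsplit, Set.diff_eq_empty.mpr hBQ, Set.union_empty]
          exact hgfpX hAderiv
      · refine Or.inr ⟨?_, ?_⟩
        · rw [hsplit]
          constructor
          · intro h
            refine hArun.1 ?_
            rw [← Set.subset_empty_iff] at h ⊢
            exact Set.subset_union_left.trans h
          · rintro γ (hγ | hγ)
            · exact hArun.2 γ hγ
            · exact hBrun.2 γ hγ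
        · rw [hsplit, hderiv]
          exact ⟨_, _, rfl, hAderiv, hBderiv⟩
  show (P₁ ∪ P₂, Q) ∈ OrderHom.gfp (DVPhat R)
  exact (OrderHom.le_gfp (DVPhat R) hpost) hmem
end

section
/- Let (M, →) be a transition system. The set X = {(P₁ ∪ P₂, Q) | (M, →) ⊨∀ P₁ ⇒ Q and (M, →) ⊨∀ P₂ ⇒ Q} is equal to ν DVP̂, the set of all demonically valid reachability predicates over (M, →). -/
variable {M : Type*}

lemma derivS_union (R : M → M → Prop) (A B : Set M) :
    derivS R (A ∪ B) = derivS R A ∪ derivS R B := by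
  ext x
  simp only [derivS, Set.mem_setOf_eq, Set.mem_union]
  constructor
  · rintro ⟨γ, hγ | hγ, hR⟩
    · exact Or.inl ⟨γ, hγ, hR⟩
    · exact Or.inr ⟨γ, hγ, hR⟩
  · rintro (⟨γ, hγ, hR⟩ | ⟨γ, hγ, hR⟩)
    · exact ⟨γ, Or.inl hγ, hR⟩
    · exact ⟨γ, Or.inr hγ, hR⟩

lemma runnable_union_left (R : M → M → Prop) {A B : Set M}
    (hA : Runnable R A) (hB : ∀ γ ∈ B, ∃ γ', R γ γ') : Runnable R (A ∪ B) := by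
  refine ⟨?_, ?_⟩
  · intro h
    exact hA.1 (Set.subset_empty_iff.mp (h ▸ Set.subset_union_left))
  · rintro γ (hγ | hγ)
    · exact hA.2 γ hγ
    · exact hB γ hγ

/-- The set of unions of pairs of demonically valid predicates with the same target is
exactly `ν DVP̂`. -/
theorem union_demValid_eq_gfp (M : Type*) (R : M → M → Prop) :
    {pq : Set M × Set M | ∃ P₁ P₂ Q, pq = (P₁ ∪ P₂, Q) ∧
        DemValid R P₁ Q ∧ DemValid R P₂ Q} =
      OrderHom.gfp (DVPhat R) := by
  apply le_antisymm
  · apply OrderHom.le_gfp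
    rintro ⟨P, Q⟩ ⟨P₁, P₂, Q', heq, h1, h2⟩
    obtain ⟨hP, hQ⟩ := Prod.mk.injEq .. ▸ heq
    subst hP hQ
    unfold DemValid at h1 h2
    rw [← OrderHom.map_gfp (DVPhat R)] at h1 h2
    have h1' := h1
    have h2' := h2
    have hdiff : (P₁ ∪ P₂) \ Q = (P₁ \ Q) ∪ (P₂ \ Q) := Set.union_diff_distrib
    rcases h1' with hs1 | ⟨hr1, hd1⟩ <;> rcases h2' with hs2 | ⟨hr2, hd2⟩
    · exact Or.inl (Set.union_subset hs1 hs2)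
    · refine Or.inr ?_
      have h0 : P₁ \ Q = ∅ := Set.diff_eq_empty.mpr hs1
      have : (P₁ ∪ P₂) \ Q = P₂ \ Q := by rw [hdiff, h0, Set.empty_union]
      rw [show ((P₁ ∪ P₂, Q) : Set M × Set M).1 = P₁ ∪ P₂ from rfl] at *
      refine ⟨by simpa [this] using hr2, ?_⟩
      simp only [this]
      exact ⟨derivS R (P₂ \ Q), derivS R (P₂ \ Q), Q, by simp, hd2, hd2⟩
    · refine Or.inr ?_
      have h0 : P₂ \ Q = ∅ := Set.diff_eq_empty.mpr hs2
      have : (P₁ ∪ P₂) \ Q = P₁ \ Q := by rw [hdiff, h0, Set.union_empty]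
      refine ⟨by simpa [this] using hr1, ?_⟩
      simp only [this]
      exact ⟨derivS R (P₁ \ Q), derivS R (P₁ \ Q), Q, by simp, hd1, hd1⟩
    · refine Or.inr ?_
      have hrun : Runnable R ((P₁ ∪ P₂) \ Q) := by
        rw [hdiff]; exact runnable_union_left R hr1 hr2.2
      refine ⟨hrun, ?_⟩
      simp only [hdiff, derivS_union]
      exact ⟨derivS R (P₁ \ Q), derivS R (P₂ \ Q), Q, rfl, hd1, hd2⟩
  · rintro ⟨P, Q⟩ h
    exact ⟨P, P, Q, by simp, h, h⟩
end

section
/- Let L be a first-order language (with equality), M an L-structure, X a set of variables, t and t' L-terms with variables in X, and φ, φ' first-order L-formulas (possibly containing quantifiers) with free variables in X. Let S = (var(t) ∪ var(φ)) ∩ (var(t') ∪ var(φ')) be the set of shared variables and let x̃ = (var(t') ∪ var(φ')) \ (var(t) ∪ var(φ)). Then the following two conditions are equivalent: (1) for every map σ : S → M, the set {α(t) | α : X → M, M,α ⊨ φ, α agrees with σ on S} is contained in the set {α'(t') | α' : X → M, M,α' ⊨ φ', α' agrees with σ on S}; (2) for every valuation α : X → M with M,α ⊨ φ there exists a valuation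 β : X → M that agrees with α on every variable not in x̃ such that β(t) = β(t') and M,β ⊨ φ'. -/
open FirstOrder Language

private theorem term_realize_congr' {L : FirstOrder.Language} {M : Type*} [L.Structure M]
    {X : Type*} [DecidableEq X] {t : L.Term X} {v w : X → M}
    (h : ∀ x ∈ t.varFinset, v x = w x) : t.realize v = t.realize w := by
  rw [← Term.realize_restrictVar' (Set.Subset.refl (↑t.varFinset : Set X)) (v := v),
    ← Term.realize_restrictVar' (Set.Subset.refl (↑t.varFinset : Set X)) (v := w)]
  congr 1
  funext ⟨x, hx⟩
  exact h x hx

private theorem formula_realize_congr' {L : FirstOrder.Language} {M : Type*} [L.Structure M]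
    {X : Type*} [DecidableEq X] {φ : L.Formula X} {v w : X → M}
    (h : ∀ x ∈ BoundedFormula.freeVarFinset φ, v x = w x) : φ.Realize v ↔ φ.Realize w := by
  have hv := BoundedFormula.realize_restrictFreeVar'
    (Set.Subset.refl (↑φ.freeVarFinset : Set X)) (v := v) (xs := (default : Fin 0 → M))
  have hw := BoundedFormula.realize_restrictFreeVar'
    (Set.Subset.refl (↑φ.freeVarFinset : Set X)) (v := w) (xs := (default : Fin 0 → M))
  have hvw : (v ∘ (Subtype.val : (↑φ.freeVarFinset : Set X) → X)) =
      (w ∘ (Subtype.val : (↑φ.freeVarFinset : Set X) → X)) := by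
    funext ⟨x, hx⟩
    exact h x hx
  unfold Formula.Realize
  rw [← hv, ← hw, hvw]

/-- Semantic characterisation of shared-variable inclusion of constrained terms:
`⟦t|φ⟧ ⊆_shared ⟦t'|φ'⟧` iff `M ⊨ φ → (∃x̃)(t = t' ∧ φ')`, stated semantically. -/
theorem constrainedTerm_subset_shared_iff
    {L : FirstOrder.Language} {M : Type*} [L.Structure M]
    {X : Type*} [DecidableEq X]
    (t t' : L.Term X) (φ φ' : L.Formula X)
    (S xt : Set X)
    (hS : S = ((↑t.varFinset ∪ ↑(BoundedFormula.freeVarFinset φ) : Set X)) ∩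
        ((↑t'.varFinset ∪ ↑(BoundedFormula.freeVarFinset φ') : Set X)))
    (hxt : xt = ((↑t'.varFinset ∪ ↑(BoundedFormula.freeVarFinset φ') : Set X)) \
        ((↑t.varFinset ∪ ↑(BoundedFormula.freeVarFinset φ) : Set X))) :
    (∀ σ : S → M,
        {m : M | ∃ α : X → M, φ.Realize α ∧
            (∀ x (hx : x ∈ S), α x = σ ⟨x, hx⟩) ∧ m = t.realize α} ⊆
          {m : M | ∃ α' : X → M, φ'.Realize α' ∧
            (∀ x (hx : x ∈ S), α' x = σ ⟨x, hx⟩) ∧ m = t'.realize α'}) ↔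
      (∀ α : X → M, φ.Realize α →
        ∃ β : X → M, (∀ x, x ∉ xt → β x = α x) ∧
          t.realize β = t'.realize β ∧ φ'.Realize β) := by
  set A : Set X := (↑t.varFinset ∪ ↑(BoundedFormula.freeVarFinset φ) : Set X) with hA
  set B : Set X := (↑t'.varFinset ∪ ↑(BoundedFormula.freeVarFinset φ') : Set X) with hB
  classical
  constructor
  · intro h α hα
    have hmem : t.realize α ∈ {m : M | ∃ α₀ : X → M, φ.Realize α₀ ∧
        (∀ x (hx : x ∈ S), α₀ x = (fun s : S => α s.1) ⟨x, hx⟩) ∧ m = t.realize α₀} :=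
      ⟨α, hα, fun x hx => rfl, rfl⟩
    obtain ⟨α', hα', hagr, heq⟩ := h (fun s : S => α s.1) hmem
    refine ⟨fun x => if x ∈ xt then α' x else α x, fun x hx => if_neg hx, ?_, ?_⟩
    · -- agrees with α on A, with α' on B
      have h1 : t.realize (fun x => if x ∈ xt then α' x else α x) = t.realize α := by
        apply term_realize_congr'
        intro x hx
        have : x ∉ xt := by
          rw [hxt]; exact fun hc => hc.2 (Or.inl hx)
        simp [this]
      have h2 : t'.realize (fun x => if x ∈ xt then α' x else α x) = t'.realize α' := by
        apply term_realize_congr'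
        intro x hx
        by_cases hxt' : x ∈ xt
        · simp [hxt']
        · have hxA : x ∈ A := by
            by_contra hc
            exact hxt' (hxt ▸ ⟨Or.inl hx, hc⟩)
          have hxS : x ∈ S := hS ▸ ⟨hxA, Or.inl hx⟩
          simp [hxt', hagr x hxS]
      rw [h1, h2, heq]
    · rw [formula_realize_congr' (w := α')]
      · exact hα'
      · intro x hx
        by_cases hxt' : x ∈ xt
        · simp [hxt']
        · have hxA : x ∈ A := by
            by_contra hc
            exact hxt' (hxt ▸ ⟨Or.inr hx, hc⟩)
          have hxS : x ∈ S := hS ▸ ⟨hxA, Or.inr hx⟩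
          simp [hxt', hagr x hxS]
  · intro h σ m hm
    obtain ⟨α, hα, hagr, hm⟩ := hm
    obtain ⟨β, hβα, hβeq, hβφ'⟩ := h α hα
    have hdisj : ∀ x ∈ A, x ∉ xt := by
      intro x hx hc
      exact (hxt ▸ hc).2 hx
    refine ⟨β, hβφ', ?_, ?_⟩
    · intro x hx
      have hxA : x ∈ A := (hS ▸ hx).1
      rw [hβα x (hdisj x hxA)]
      exact hagr x hx
    · have : t.realize α = t.realize β := by
        apply term_realize_congr'
        intro x hx
        exact (hβα x (hdisj x (Or.inl hx))).symm
      rw [hm, this, hβeq]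
end

section
/- Let (M, →) be a transition system. The set Y = {(P, Q) | every complete execution path τ of (M, →) with hd(τ) ∈ P satisfies (τ, (P, Q)) ∈ ν EPSRP̂} is a post-fixed point of the operator DVP̂, i.e. Y ⊆ DVP̂(Y); consequently Y ⊆ ν DVP̂. -/
variable {M : Type*}

theorem ExecPath.ext'_s10 {R : M → M → Prop} {τ τ' : ExecPath M R} (h : τ.seq = τ'.seq) :
    τ = τ' := by
  cases τ; cases τ'; simp only at h; subst h; rfl

theorem ExecPath.hd_eq {R : M → M → Prop} {τ : ExecPath M R} {γ : M}
    (h : τ.seq 0 = some γ) : τ.hd = γ := by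
  simp [ExecPath.hd, h]

theorem ExecPath.seq_zero_s10 {R : M → M → Prop} (τ : ExecPath M R) :
    τ.seq 0 = some τ.hd := by
  simp [ExecPath.hd]

theorem derivS_mono {R : M → M → Prop} {P P' : Set M} (h : P ⊆ P') :
    derivS R P ⊆ derivS R P' := by
  rintro x ⟨γ, hγ, hR⟩; exact ⟨γ, h hγ, hR⟩

theorem pathSat_restrict {R : M → M → Prop} {τ : ExecPath M R} {P P' Q : Set M}
    (hsat : (τ, (P, Q)) ∈ OrderHom.gfp (EPSRPhat R))
    (hhd : τ.hd ∈ P') (hsub : P' ⊆ P) :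
    (τ, (P', Q)) ∈ OrderHom.gfp (EPSRPhat R) := by
  set Z : Set (ExecPath M R × (Set M × Set M)) :=
    {p | ∃ P₀, (p.1, (P₀, p.2.2)) ∈ OrderHom.gfp (EPSRPhat R) ∧
      p.1.hd ∈ p.2.1 ∧ p.2.1 ⊆ P₀} with hZ
  have hpost : Z ≤ (EPSRPhat R) Z := by
    rintro ⟨σ, P'', Q''⟩ ⟨P₀, hsat₀, hhd₀, hsub₀⟩
    have := (EPSRPhat R).map_gfp ▸ hsat₀
    rcases this with h | ⟨γ₀, σ', hcons, hγP, hRstep, hsat'⟩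
    · exact Or.inl ⟨hhd₀, h.2⟩
    · have hγ : γ₀ = σ.hd := (ExecPath.hd_eq hcons.1).symm
      refine Or.inr ⟨γ₀, σ', hcons, hγ ▸ hhd₀, hRstep, ?_⟩
      exact ⟨derivS R P₀, hsat', ⟨γ₀, hγ ▸ hhd₀, hRstep⟩, derivS_mono hsub₀⟩
  have := OrderHom.le_gfp (EPSRPhat R) hpost
  exact this ⟨P, hsat, hhd, hsub⟩

/-- The set of reachability predicates `(P, Q)` satisfied by every complete execution
path starting in `P` is a post-fixed point of `DVP̂`, hence included in `ν DVP̂`. -/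
theorem pathSat_postFixed (M : Type*) (R : M → M → Prop)
    (Y : Set (Set M × Set M))
    (hY : Y = {pq | ∀ τ : ExecPath M R, τ.hd ∈ pq.1 →
        (τ, (pq.1, pq.2)) ∈ OrderHom.gfp (EPSRPhat R)}) :
    Y ⊆ DVPhat R Y ∧ Y ⊆ OrderHom.gfp (DVPhat R) := by
  subst hY
  have h1 : {pq : Set M × Set M | ∀ τ : ExecPath M R, τ.hd ∈ pq.1 →
        (τ, (pq.1, pq.2)) ∈ OrderHom.gfp (EPSRPhat R)} ⊆
      DVPhat R {pq | ∀ τ : ExecPath M R, τ.hd ∈ pq.1 →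
        (τ, (pq.1, pq.2)) ∈ OrderHom.gfp (EPSRPhat R)} := by
    rintro ⟨P, Q⟩ hPQ
    by_cases hsub : P ⊆ Q
    · exact Or.inl hsub
    refine Or.inr ⟨⟨?_, ?_⟩, ?_⟩
    · -- P \ Q ≠ ∅
      intro h
      obtain ⟨γ, hγP, hγQ⟩ := Set.not_subset.mp hsub
      exact absurd h (Set.nonempty_iff_ne_empty.mp ⟨γ, hγP, hγQ⟩)
    · -- every state of P \ Q has a successor
      rintro γ ⟨hγP, hγQ⟩
      by_contra hno
      push_neg at hno
      set τ₀ : ExecPath M R :=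
        { seq := fun n => if n = 0 then some γ else none
          nonempty := by simp
          closed := by intro n h; simp at h
          step := by intro n a b _ hb; simp at hb
          complete := by
            intro n a ha _ b
            have hn : n = 0 := by by_contra h; simp [h] at ha
            have : a = γ := by symm; simpa [hn] using ha
            exact this ▸ hno b } with hτ₀
      have hhd : τ₀.hd = γ := ExecPath.hd_eq (by simp [hτ₀])
      have := (EPSRPhat R).map_gfp ▸ hPQ τ₀ (hhd ▸ hγP)
      rcases this with h | ⟨γ₀, τ', hcons, _⟩
      · exact hγQ (hhd ▸ h.2)
      · have h1 : τ₀.seq 1 = τ'.seq 0 := hcons.2 0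
        have := τ'.nonempty
        rw [← h1] at this
        simp [hτ₀] at this
    · -- (∂(P\Q), Q) ∈ Y
      intro τ' hhd'
      obtain ⟨γ, hγ, hR⟩ := hhd'
      set τ : ExecPath M R :=
        { seq := fun n => match n with | 0 => some γ | n + 1 => τ'.seq n
          nonempty := by simp
          closed := by
            intro n h
            cases n with
            | zero => simp
            | succ m => exact τ'.closed m h
          step := by
            intro n a b ha hb
            cases n with
            | zero =>
              have ha' : a = γ := by symm; simpa using ha
              have hb' : τ'.seq 0 = some b := hb
              have : b = τ'.hd := by
                have := τ'.seq_zero_s10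
                rw [hb'] at this; exact Option.some_injective _ this
              exact ha' ▸ this ▸ hR
            | succ m => exact τ'.step m a b ha hb
          complete := by
            intro n a ha hnone
            cases n with
            | zero =>
              exfalso
              have := τ'.nonempty
              rw [show τ'.seq 0 = none from hnone] at this
              simp at this
            | succ m => exact τ'.complete m a ha hnone } with hτ
      have hhd : τ.hd = γ := ExecPath.hd_eq (by simp [hτ])
      have := (EPSRPhat R).map_gfp ▸ hPQ τ (hhd ▸ hγ.1)
      rcases this with h | ⟨γ₀, τ'', hcons, _, _, hsat'⟩
      · exact absurd (hhd ▸ h.2) hγ.2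
      · have hτ'' : τ'' = τ' := by
          apply ExecPath.ext'_s10
          funext n
          exact (hcons.2 n).symm
        subst hτ''
        exact pathSat_restrict hsat' ⟨γ, hγ, hR⟩ (derivS_mono (Set.diff_subset))
  exact ⟨h1, OrderHom.le_gfp (DVPhat R) h1⟩
end
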